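/- Every nonzero homogeneous (with respect to total degree) polynomial lying in the intersection J_{C3} ∩ J_{K13} has total degree at least 4. Equivalently, the ideal J_{C3} ∩ J_{K13} is generated in degrees at least four. -/

import Mathlib

/- Variables: the polynomial ring K[x1,x2,x3,x4,y1,y2,y3,y4] is modelled as
`MvPolynomial (Fin 4 ⊕ Fin 4) K`, where `x (k-1) = X (Sum.inl (k-1))` stands for x_k and
`y (k-1) = X (Sum.inr (k-1))` stands for y_k. -/

open MvPolynomial

noncomputable section

variable (K : Type*) [Field K]

/-- x_(i+1) -/
noncomputable def x (i : Fin 4) : MvPolynomial (Fin 4 ⊕ Fin 4) K := X (Sum.inl i)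

/-- y_(i+1) -/
noncomputable def y (i : Fin 4) : MvPolynomial (Fin 4 ⊕ Fin 4) K := X (Sum.inr i)

/-- The parity binomial edge ideal of the triangle on vertices {1,3,4}. -/
noncomputable def JC3 : Ideal (MvPolynomial (Fin 4 ⊕ Fin 4) K) :=
  Ideal.span {x K 0 * x K 2 - y K 0 * y K 2,
              x K 0 * x K 3 - y K 0 * y K 3,
              x K 2 * x K 3 - y K 2 * y K 3}

/-- The parity binomial edge ideal of the star with center 2 and leaves 1,3,4. -/
noncomputable def JK13 : Ideal (MvPolynomial (Fin 4 ⊕ Fin 4) K) :=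
  Ideal.span {x K 0 * x K 1 - y K 0 * y K 1,
              x K 1 * x K 2 - y K 1 * y K 2,
              x K 1 * x K 3 - y K 1 * y K 3}

/-! ### Auxiliary material -/

/-- The exponent finsupp of a single variable. -/
noncomputable def ee (i : Fin 4 ⊕ Fin 4) : (Fin 4 ⊕ Fin 4) →₀ ℕ := Finsupp.single i 1

@[simp] lemma ee_apply (i k : Fin 4 ⊕ Fin 4) : ee i k = if i = k then 1 else 0 :=
  Finsupp.single_apply

lemma aux_pair_le_iff {i j : Fin 4 ⊕ Fin 4} (h : i ≠ j) (m : (Fin 4 ⊕ Fin 4) →₀ ℕ) :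
    ee i + ee j ≤ m ↔ 1 ≤ m i ∧ 1 ≤ m j := by
  simp only [Finsupp.le_def, ee, Finsupp.add_apply, Finsupp.single_apply]
  constructor
  · intro H
    have hi := H i
    have hj := H j
    simp [h, Ne.symm h] at hi hj
    omega
  · rintro ⟨h1, h2⟩ k
    by_cases hik : i = k <;> by_cases hjk : j = k <;>
      simp only [if_pos, if_neg, hik, hjk, if_true, if_false] <;> simp_all

lemma aux_degree_eq (m : (Fin 4 ⊕ Fin 4) →₀ ℕ) : m.degree =
    m (Sum.inl 0) + m (Sum.inl 1) + m (Sum.inl 2) + m (Sum.inl 3) +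
    (m (Sum.inr 0) + m (Sum.inr 1) + m (Sum.inr 2) + m (Sum.inr 3)) := by
  rw [Finsupp.degree_apply, Finset.sum_subset (Finset.subset_univ _)
    (by intro i _ h; simpa using Finsupp.notMem_support_iff.mp h)]
  simp [Fintype.sum_sum_type, Fin.sum_univ_four]

lemma aux_mem_span_triple {R : Type*} [CommRing R] {g1 g2 g3 f : R}
    (h : f ∈ Ideal.span {g1, g2, g3}) :
    ∃ c1 c2 c3, f = c1 * g1 + c2 * g2 + c3 * g3 := by
  rw [show ({g1, g2, g3} : Set R) = insert g1 (insert g2 {g3}) from rfl,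
    Ideal.mem_span_insert] at h
  obtain ⟨c1, z, hz, rfl⟩ := h
  rw [Ideal.mem_span_insert] at hz
  obtain ⟨c2, w, hw, rfl⟩ := hz
  rw [Ideal.mem_span_singleton'] at hw
  obtain ⟨c3, rfl⟩ := hw
  exact ⟨c1, c2, c3, by ring⟩

lemma aux_X_mul_X (i j : Fin 4 ⊕ Fin 4) :
    (X i * X j : MvPolynomial (Fin 4 ⊕ Fin 4) K) = monomial (ee i + ee j) 1 := by
  rw [X, X, monomial_mul, one_mul]
  rfl

lemma aux_coeff_rep (c1 c2 c3 : MvPolynomial (Fin 4 ⊕ Fin 4) K)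
    (v1 w1 v2 w2 v3 w3 m : (Fin 4 ⊕ Fin 4) →₀ ℕ) :
    coeff m (c1 * (monomial v1 1 - monomial w1 1) + c2 * (monomial v2 1 - monomial w2 1)
        + c3 * (monomial v3 1 - monomial w3 1)) =
      ((if v1 ≤ m then coeff (m - v1) c1 else 0) - (if w1 ≤ m then coeff (m - w1) c1 else 0))
      + ((if v2 ≤ m then coeff (m - v2) c2 else 0) - (if w2 ≤ m then coeff (m - w2) c2 else 0))
      + ((if v3 ≤ m then coeff (m - v3) c3 else 0) - (if w3 ≤ m then coeff (m - w3) c3 else 0)) := by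
  simp [mul_sub, coeff_mul_monomial']

lemma leV1 (m : (Fin 4 ⊕ Fin 4) →₀ ℕ) :
    ee (Sum.inl 0) + ee (Sum.inl 2) ≤ m ↔ 1 ≤ m (Sum.inl 0) ∧ 1 ≤ m (Sum.inl 2) :=
  aux_pair_le_iff (by decide) m

lemma leW1 (m : (Fin 4 ⊕ Fin 4) →₀ ℕ) :
    ee (Sum.inr 0) + ee (Sum.inr 2) ≤ m ↔ 1 ≤ m (Sum.inr 0) ∧ 1 ≤ m (Sum.inr 2) :=
  aux_pair_le_iff (by decide) m

lemma leV2 (m : (Fin 4 ⊕ Fin 4) →₀ ℕ) :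
    ee (Sum.inl 0) + ee (Sum.inl 3) ≤ m ↔ 1 ≤ m (Sum.inl 0) ∧ 1 ≤ m (Sum.inl 3) :=
  aux_pair_le_iff (by decide) m

lemma leW2 (m : (Fin 4 ⊕ Fin 4) →₀ ℕ) :
    ee (Sum.inr 0) + ee (Sum.inr 3) ≤ m ↔ 1 ≤ m (Sum.inr 0) ∧ 1 ≤ m (Sum.inr 3) :=
  aux_pair_le_iff (by decide) m

lemma leV3 (m : (Fin 4 ⊕ Fin 4) →₀ ℕ) :
    ee (Sum.inl 2) + ee (Sum.inl 3) ≤ m ↔ 1 ≤ m (Sum.inl 2) ∧ 1 ≤ m (Sum.inl 3) :=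
  aux_pair_le_iff (by decide) m

lemma leW3 (m : (Fin 4 ⊕ Fin 4) →₀ ℕ) :
    ee (Sum.inr 2) + ee (Sum.inr 3) ≤ m ↔ 1 ≤ m (Sum.inr 2) ∧ 1 ≤ m (Sum.inr 3) :=
  aux_pair_le_iff (by decide) m

lemma leP1 (m : (Fin 4 ⊕ Fin 4) →₀ ℕ) :
    ee (Sum.inl 0) + ee (Sum.inl 1) ≤ m ↔ 1 ≤ m (Sum.inl 0) ∧ 1 ≤ m (Sum.inl 1) :=
  aux_pair_le_iff (by decide) m

lemma leQ1 (m : (Fin 4 ⊕ Fin 4) →₀ ℕ) :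
    ee (Sum.inr 0) + ee (Sum.inr 1) ≤ m ↔ 1 ≤ m (Sum.inr 0) ∧ 1 ≤ m (Sum.inr 1) :=
  aux_pair_le_iff (by decide) m

lemma leP2 (m : (Fin 4 ⊕ Fin 4) →₀ ℕ) :
    ee (Sum.inl 1) + ee (Sum.inl 2) ≤ m ↔ 1 ≤ m (Sum.inl 1) ∧ 1 ≤ m (Sum.inl 2) :=
  aux_pair_le_iff (by decide) m

lemma leQ2 (m : (Fin 4 ⊕ Fin 4) →₀ ℕ) :
    ee (Sum.inr 1) + ee (Sum.inr 2) ≤ m ↔ 1 ≤ m (Sum.inr 1) ∧ 1 ≤ m (Sum.inr 2) :=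
  aux_pair_le_iff (by decide) m

lemma leP3 (m : (Fin 4 ⊕ Fin 4) →₀ ℕ) :
    ee (Sum.inl 1) + ee (Sum.inl 3) ≤ m ↔ 1 ≤ m (Sum.inl 1) ∧ 1 ≤ m (Sum.inl 3) :=
  aux_pair_le_iff (by decide) m

lemma leQ3 (m : (Fin 4 ⊕ Fin 4) →₀ ℕ) :
    ee (Sum.inr 1) + ee (Sum.inr 3) ≤ m ↔ 1 ≤ m (Sum.inr 1) ∧ 1 ≤ m (Sum.inr 3) :=
  aux_pair_le_iff (by decide) m

/-- Every nonzero homogeneous polynomial in J_{C3} ∩ J_{K13} has total degree at least 4. -/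
theorem JC3_inter_JK13_generated_in_degree_ge_four
    (f : MvPolynomial (Fin 4 ⊕ Fin 4) K) (d : ℕ)
    (hf : f ∈ JC3 K ⊓ JK13 K) (hhom : f.IsHomogeneous d) (hne : f ≠ 0) :
    4 ≤ d := by
  obtain ⟨hf1, hf2⟩ := Submodule.mem_inf.mp hf
  rw [JC3] at hf1
  rw [JK13] at hf2
  simp only [x, y, aux_X_mul_X] at hf1 hf2
  obtain ⟨c1, c2, c3, hc⟩ := aux_mem_span_triple hf1
  obtain ⟨b1, b2, b3, hb⟩ := aux_mem_span_triple hf2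
  have hC : ∀ m : (Fin 4 ⊕ Fin 4) →₀ ℕ, coeff m f =
      ((if ee (Sum.inl 0) + ee (Sum.inl 2) ≤ m then coeff (m - (ee (Sum.inl 0) + ee (Sum.inl 2))) c1 else 0) - (if ee (Sum.inr 0) + ee (Sum.inr 2) ≤ m then coeff (m - (ee (Sum.inr 0) + ee (Sum.inr 2))) c1 else 0))
      + ((if ee (Sum.inl 0) + ee (Sum.inl 3) ≤ m then coeff (m - (ee (Sum.inl 0) + ee (Sum.inl 3))) c2 else 0) - (if ee (Sum.inr 0) + ee (Sum.inr 3) ≤ m then coeff (m - (ee (Sum.inr 0) + ee (Sum.inr 3))) c2 else 0))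
      + ((if ee (Sum.inl 2) + ee (Sum.inl 3) ≤ m then coeff (m - (ee (Sum.inl 2) + ee (Sum.inl 3))) c3 else 0) - (if ee (Sum.inr 2) + ee (Sum.inr 3) ≤ m then coeff (m - (ee (Sum.inr 2) + ee (Sum.inr 3))) c3 else 0)) := by
    intro m; rw [hc, aux_coeff_rep]
  have hK : ∀ m : (Fin 4 ⊕ Fin 4) →₀ ℕ, coeff m f =
      ((if ee (Sum.inl 0) + ee (Sum.inl 1) ≤ m then coeff (m - (ee (Sum.inl 0) + ee (Sum.inl 1))) b1 else 0) - (if ee (Sum.inr 0) + ee (Sum.inr 1) ≤ m then coeff (m - (ee (Sum.inr 0) + ee (Sum.inr 1))) b1 else 0))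
      + ((if ee (Sum.inl 1) + ee (Sum.inl 2) ≤ m then coeff (m - (ee (Sum.inl 1) + ee (Sum.inl 2))) b2 else 0) - (if ee (Sum.inr 1) + ee (Sum.inr 2) ≤ m then coeff (m - (ee (Sum.inr 1) + ee (Sum.inr 2))) b2 else 0))
      + ((if ee (Sum.inl 1) + ee (Sum.inl 3) ≤ m then coeff (m - (ee (Sum.inl 1) + ee (Sum.inl 3))) b3 else 0) - (if ee (Sum.inr 1) + ee (Sum.inr 3) ≤ m then coeff (m - (ee (Sum.inr 1) + ee (Sum.inr 3))) b3 else 0)) := by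
    intro m; rw [hb, aux_coeff_rep]
  have key1x : coeff (ee (Sum.inl 1)) c1 = 0 := by
    have hA := hK ((ee (Sum.inr 0) + ee (Sum.inr 2)) + ee (Sum.inl 1))
    have hB := hC ((ee (Sum.inr 0) + ee (Sum.inr 2)) + ee (Sum.inl 1))
    simp only [leP1, leQ1, leP2, leQ2, leP3, leQ3] at hA
    simp only [leV1, leW1, leV2, leW2, leV3, leW3] at hB
    simp [Finsupp.add_apply, add_tsub_cancel_left] at hA hB
    linear_combination hB - hA
  have key1y : coeff (ee (Sum.inr 1)) c1 = 0 := by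
    have hA := hK ((ee (Sum.inl 0) + ee (Sum.inl 2)) + ee (Sum.inr 1))
    have hB := hC ((ee (Sum.inl 0) + ee (Sum.inl 2)) + ee (Sum.inr 1))
    simp only [leP1, leQ1, leP2, leQ2, leP3, leQ3] at hA
    simp only [leV1, leW1, leV2, leW2, leV3, leW3] at hB
    simp [Finsupp.add_apply, add_tsub_cancel_left] at hA hB
    linear_combination hA - hB
  have key2x : coeff (ee (Sum.inl 1)) c2 = 0 := by
    have hA := hK ((ee (Sum.inr 0) + ee (Sum.inr 3)) + ee (Sum.inl 1))
    have hB := hC ((ee (Sum.inr 0) + ee (Sum.inr 3)) + ee (Sum.inl 1))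
    simp only [leP1, leQ1, leP2, leQ2, leP3, leQ3] at hA
    simp only [leV1, leW1, leV2, leW2, leV3, leW3] at hB
    simp [Finsupp.add_apply, add_tsub_cancel_left] at hA hB
    linear_combination hB - hA
  have key2y : coeff (ee (Sum.inr 1)) c2 = 0 := by
    have hA := hK ((ee (Sum.inl 0) + ee (Sum.inl 3)) + ee (Sum.inr 1))
    have hB := hC ((ee (Sum.inl 0) + ee (Sum.inl 3)) + ee (Sum.inr 1))
    simp only [leP1, leQ1, leP2, leQ2, leP3, leQ3] at hA
    simp only [leV1, leW1, leV2, leW2, leV3, leW3] at hB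
    simp [Finsupp.add_apply, add_tsub_cancel_left] at hA hB
    linear_combination hA - hB
  have key3x : coeff (ee (Sum.inl 1)) c3 = 0 := by
    have hA := hK ((ee (Sum.inr 2) + ee (Sum.inr 3)) + ee (Sum.inl 1))
    have hB := hC ((ee (Sum.inr 2) + ee (Sum.inr 3)) + ee (Sum.inl 1))
    simp only [leP1, leQ1, leP2, leQ2, leP3, leQ3] at hA
    simp only [leV1, leW1, leV2, leW2, leV3, leW3] at hB
    simp [Finsupp.add_apply, add_tsub_cancel_left] at hA hB
    linear_combination hB - hA
  have key3y : coeff (ee (Sum.inr 1)) c3 = 0 := by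
    have hA := hK ((ee (Sum.inl 2) + ee (Sum.inl 3)) + ee (Sum.inr 1))
    have hB := hC ((ee (Sum.inl 2) + ee (Sum.inl 3)) + ee (Sum.inr 1))
    simp only [leP1, leQ1, leP2, leQ2, leP3, leQ3] at hA
    simp only [leV1, leW1, leV2, leW2, leV3, leW3] at hB
    simp [Finsupp.add_apply, add_tsub_cancel_left] at hA hB
    linear_combination hA - hB
  by_contra hd4
  apply hne
  ext m
  rw [coeff_zero]
  by_cases hdeg : m.degree = d
  swap
  · exact hhom.coeff_eq_zero hdeg
  rw [aux_degree_eq] at hdeg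
  by_cases h2 : m (Sum.inl 1) = 0 ∧ m (Sum.inr 1) = 0
  · obtain ⟨ha, hb2⟩ := h2
    rw [hK m]
    simp only [leP1, leQ1, leP2, leQ2, leP3, leQ3, ha, hb2]
    simp
  · have h2' : 1 ≤ m (Sum.inl 1) + m (Sum.inr 1) := by
      rcases not_and_or.mp h2 with h | h <;> omega
    clear h2
    rw [hC m]
    simp only [leV1, leW1, leV2, leW2, leV3, leW3]
    by_cases hc1 : 1 ≤ m (Sum.inl 0) ∧ 1 ≤ m (Sum.inl 2)
    · rw [if_pos hc1, if_neg (show ¬(1 ≤ m (Sum.inr 0) ∧ 1 ≤ m (Sum.inr 2)) by omega), if_neg (show ¬(1 ≤ m (Sum.inl 0) ∧ 1 ≤ m (Sum.inl 3)) by omega), if_neg (show ¬(1 ≤ m (Sum.inr 0) ∧ 1 ≤ m (Sum.inr 3)) by omega), if_neg (show ¬(1 ≤ m (Sum.inl 2) ∧ 1 ≤ m (Sum.inl 3)) by omega), if_neg (show ¬(1 ≤ m (Sum.inr 2) ∧ 1 ≤ m (Sum.inr 3)) by omega)]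
      simp only [sub_zero, zero_sub, add_zero, zero_add, neg_eq_zero]
      have hA1 : m (Sum.inl 0) = 1 := by omega
      have hB1 : m (Sum.inl 2) = 1 := by omega
      have hz0 : m (Sum.inl 3) = 0 := by omega
      have hz1 : m (Sum.inr 0) = 0 := by omega
      have hz2 : m (Sum.inr 2) = 0 := by omega
      have hz3 : m (Sum.inr 3) = 0 := by omega
      rcases (show m (Sum.inl 1) = 1 ∧ m (Sum.inr 1) = 0 ∨ m (Sum.inl 1) = 0 ∧ m (Sum.inr 1) = 1 by omega) with ⟨hu, hv⟩ | ⟨hu, hv⟩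
      · have hmm : m = (ee (Sum.inl 0) + ee (Sum.inl 2)) + ee (Sum.inl 1) := by
          ext k
          rcases k with i | i <;> fin_cases i <;>
            simp [Finsupp.add_apply, hA1, hB1, hz0, hz1, hz2, hz3, hu, hv]
        rw [hmm, add_tsub_cancel_left]
        exact key1x
      · have hmm : m = (ee (Sum.inl 0) + ee (Sum.inl 2)) + ee (Sum.inr 1) := by
          ext k
          rcases k with i | i <;> fin_cases i <;>
            simp [Finsupp.add_apply, hA1, hB1, hz0, hz1, hz2, hz3, hu, hv]
        rw [hmm, add_tsub_cancel_left]
        exact key1y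
    by_cases hc2 : 1 ≤ m (Sum.inr 0) ∧ 1 ≤ m (Sum.inr 2)
    · rw [if_neg hc1, if_pos hc2, if_neg (show ¬(1 ≤ m (Sum.inl 0) ∧ 1 ≤ m (Sum.inl 3)) by omega), if_neg (show ¬(1 ≤ m (Sum.inr 0) ∧ 1 ≤ m (Sum.inr 3)) by omega), if_neg (show ¬(1 ≤ m (Sum.inl 2) ∧ 1 ≤ m (Sum.inl 3)) by omega), if_neg (show ¬(1 ≤ m (Sum.inr 2) ∧ 1 ≤ m (Sum.inr 3)) by omega)]
      simp only [sub_zero, zero_sub, add_zero, zero_add, neg_eq_zero]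
      have hA1 : m (Sum.inr 0) = 1 := by omega
      have hB1 : m (Sum.inr 2) = 1 := by omega
      have hz0 : m (Sum.inl 0) = 0 := by omega
      have hz1 : m (Sum.inl 2) = 0 := by omega
      have hz2 : m (Sum.inl 3) = 0 := by omega
      have hz3 : m (Sum.inr 3) = 0 := by omega
      rcases (show m (Sum.inl 1) = 1 ∧ m (Sum.inr 1) = 0 ∨ m (Sum.inl 1) = 0 ∧ m (Sum.inr 1) = 1 by omega) with ⟨hu, hv⟩ | ⟨hu, hv⟩
      · have hmm : m = (ee (Sum.inr 0) + ee (Sum.inr 2)) + ee (Sum.inl 1) := by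
          ext k
          rcases k with i | i <;> fin_cases i <;>
            simp [Finsupp.add_apply, hA1, hB1, hz0, hz1, hz2, hz3, hu, hv]
        rw [hmm, add_tsub_cancel_left]
        exact key1x
      · have hmm : m = (ee (Sum.inr 0) + ee (Sum.inr 2)) + ee (Sum.inr 1) := by
          ext k
          rcases k with i | i <;> fin_cases i <;>
            simp [Finsupp.add_apply, hA1, hB1, hz0, hz1, hz2, hz3, hu, hv]
        rw [hmm, add_tsub_cancel_left]
        exact key1y
    by_cases hc3 : 1 ≤ m (Sum.inl 0) ∧ 1 ≤ m (Sum.inl 3)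
    · rw [if_neg hc1, if_neg hc2, if_pos hc3, if_neg (show ¬(1 ≤ m (Sum.inr 0) ∧ 1 ≤ m (Sum.inr 3)) by omega), if_neg (show ¬(1 ≤ m (Sum.inl 2) ∧ 1 ≤ m (Sum.inl 3)) by omega), if_neg (show ¬(1 ≤ m (Sum.inr 2) ∧ 1 ≤ m (Sum.inr 3)) by omega)]
      simp only [sub_zero, zero_sub, add_zero, zero_add, neg_eq_zero]
      have hA1 : m (Sum.inl 0) = 1 := by omega
      have hB1 : m (Sum.inl 3) = 1 := by omega
      have hz0 : m (Sum.inl 2) = 0 := by omega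
      have hz1 : m (Sum.inr 0) = 0 := by omega
      have hz2 : m (Sum.inr 2) = 0 := by omega
      have hz3 : m (Sum.inr 3) = 0 := by omega
      rcases (show m (Sum.inl 1) = 1 ∧ m (Sum.inr 1) = 0 ∨ m (Sum.inl 1) = 0 ∧ m (Sum.inr 1) = 1 by omega) with ⟨hu, hv⟩ | ⟨hu, hv⟩
      · have hmm : m = (ee (Sum.inl 0) + ee (Sum.inl 3)) + ee (Sum.inl 1) := by
          ext k
          rcases k with i | i <;> fin_cases i <;>
            simp [Finsupp.add_apply, hA1, hB1, hz0, hz1, hz2, hz3, hu, hv]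
        rw [hmm, add_tsub_cancel_left]
        exact key2x
      · have hmm : m = (ee (Sum.inl 0) + ee (Sum.inl 3)) + ee (Sum.inr 1) := by
          ext k
          rcases k with i | i <;> fin_cases i <;>
            simp [Finsupp.add_apply, hA1, hB1, hz0, hz1, hz2, hz3, hu, hv]
        rw [hmm, add_tsub_cancel_left]
        exact key2y
    by_cases hc4 : 1 ≤ m (Sum.inr 0) ∧ 1 ≤ m (Sum.inr 3)
    · rw [if_neg hc1, if_neg hc2, if_neg hc3, if_pos hc4, if_neg (show ¬(1 ≤ m (Sum.inl 2) ∧ 1 ≤ m (Sum.inl 3)) by omega), if_neg (show ¬(1 ≤ m (Sum.inr 2) ∧ 1 ≤ m (Sum.inr 3)) by omega)]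
      simp only [sub_zero, zero_sub, add_zero, zero_add, neg_eq_zero]
      have hA1 : m (Sum.inr 0) = 1 := by omega
      have hB1 : m (Sum.inr 3) = 1 := by omega
      have hz0 : m (Sum.inl 0) = 0 := by omega
      have hz1 : m (Sum.inl 2) = 0 := by omega
      have hz2 : m (Sum.inl 3) = 0 := by omega
      have hz3 : m (Sum.inr 2) = 0 := by omega
      rcases (show m (Sum.inl 1) = 1 ∧ m (Sum.inr 1) = 0 ∨ m (Sum.inl 1) = 0 ∧ m (Sum.inr 1) = 1 by omega) with ⟨hu, hv⟩ | ⟨hu, hv⟩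
      · have hmm : m = (ee (Sum.inr 0) + ee (Sum.inr 3)) + ee (Sum.inl 1) := by
          ext k
          rcases k with i | i <;> fin_cases i <;>
            simp [Finsupp.add_apply, hA1, hB1, hz0, hz1, hz2, hz3, hu, hv]
        rw [hmm, add_tsub_cancel_left]
        exact key2x
      · have hmm : m = (ee (Sum.inr 0) + ee (Sum.inr 3)) + ee (Sum.inr 1) := by
          ext k
          rcases k with i | i <;> fin_cases i <;>
            simp [Finsupp.add_apply, hA1, hB1, hz0, hz1, hz2, hz3, hu, hv]
        rw [hmm, add_tsub_cancel_left]
        exact key2y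
    by_cases hc5 : 1 ≤ m (Sum.inl 2) ∧ 1 ≤ m (Sum.inl 3)
    · rw [if_neg hc1, if_neg hc2, if_neg hc3, if_neg hc4, if_pos hc5, if_neg (show ¬(1 ≤ m (Sum.inr 2) ∧ 1 ≤ m (Sum.inr 3)) by omega)]
      simp only [sub_zero, zero_sub, add_zero, zero_add, neg_eq_zero]
      have hA1 : m (Sum.inl 2) = 1 := by omega
      have hB1 : m (Sum.inl 3) = 1 := by omega
      have hz0 : m (Sum.inl 0) = 0 := by omega
      have hz1 : m (Sum.inr 0) = 0 := by omega
      have hz2 : m (Sum.inr 2) = 0 := by omega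
      have hz3 : m (Sum.inr 3) = 0 := by omega
      rcases (show m (Sum.inl 1) = 1 ∧ m (Sum.inr 1) = 0 ∨ m (Sum.inl 1) = 0 ∧ m (Sum.inr 1) = 1 by omega) with ⟨hu, hv⟩ | ⟨hu, hv⟩
      · have hmm : m = (ee (Sum.inl 2) + ee (Sum.inl 3)) + ee (Sum.inl 1) := by
          ext k
          rcases k with i | i <;> fin_cases i <;>
            simp [Finsupp.add_apply, hA1, hB1, hz0, hz1, hz2, hz3, hu, hv]
        rw [hmm, add_tsub_cancel_left]
        exact key3x
      · have hmm : m = (ee (Sum.inl 2) + ee (Sum.inl 3)) + ee (Sum.inr 1) := by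
          ext k
          rcases k with i | i <;> fin_cases i <;>
            simp [Finsupp.add_apply, hA1, hB1, hz0, hz1, hz2, hz3, hu, hv]
        rw [hmm, add_tsub_cancel_left]
        exact key3y
    by_cases hc6 : 1 ≤ m (Sum.inr 2) ∧ 1 ≤ m (Sum.inr 3)
    · rw [if_neg hc1, if_neg hc2, if_neg hc3, if_neg hc4, if_neg hc5, if_pos hc6]
      simp only [sub_zero, zero_sub, add_zero, zero_add, neg_eq_zero]
      have hA1 : m (Sum.inr 2) = 1 := by omega
      have hB1 : m (Sum.inr 3) = 1 := by omega
      have hz0 : m (Sum.inl 0) = 0 := by omega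
      have hz1 : m (Sum.inl 2) = 0 := by omega
      have hz2 : m (Sum.inl 3) = 0 := by omega
      have hz3 : m (Sum.inr 0) = 0 := by omega
      rcases (show m (Sum.inl 1) = 1 ∧ m (Sum.inr 1) = 0 ∨ m (Sum.inl 1) = 0 ∧ m (Sum.inr 1) = 1 by omega) with ⟨hu, hv⟩ | ⟨hu, hv⟩
      · have hmm : m = (ee (Sum.inr 2) + ee (Sum.inr 3)) + ee (Sum.inl 1) := by
          ext k
          rcases k with i | i <;> fin_cases i <;>
            simp [Finsupp.add_apply, hA1, hB1, hz0, hz1, hz2, hz3, hu, hv]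
        rw [hmm, add_tsub_cancel_left]
        exact key3x
      · have hmm : m = (ee (Sum.inr 2) + ee (Sum.inr 3)) + ee (Sum.inr 1) := by
          ext k
          rcases k with i | i <;> fin_cases i <;>
            simp [Finsupp.add_apply, hA1, hB1, hz0, hz1, hz2, hz3, hu, hv]
        rw [hmm, add_tsub_cancel_left]
        exact key3y
    rw [if_neg hc1, if_neg hc2, if_neg hc3, if_neg hc4, if_neg hc5, if_neg hc6]
    simp

end
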